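/- Let ξ₁,…,ξₙ be independent zero-mean real random variables such that each ξᵢ satisfies the Bernstein condition with parameter K > 0 (with σᵢ² = E[ξᵢ²]). Let w₁,…,wₙ be nonnegative reals with 2 K² wᵢ ≤ 1 for all i. Then E[ exp( Σᵢ wᵢ ξᵢ² ) ] ≤ exp( (3/2) Σᵢ wᵢ σᵢ² ). -/

import Mathlib

open MeasureTheory ProbabilityTheory

/-- Bernstein condition: for every integer `p ≥ 2`,
`E[|X|^(2p)] ≤ (1/2) p! σ² K^(2(p-1))`. -/
def BernsteinCond {Ω : Type*} [MeasurableSpace Ω] (μ : Measure Ω) (X : Ω → ℝ)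
    (σ2 K : ℝ) : Prop :=
  ∀ p : ℕ, 2 ≤ p →
    ∫ ω, |X ω| ^ (2 * p) ∂μ ≤ (1 / 2) * (Nat.factorial p) * σ2 * K ^ (2 * (p - 1))

/-- Hilbert-Schmidt (Frobenius) norm of a square real matrix. -/
noncomputable def hsNorm {n : ℕ} (M : Matrix (Fin n) (Fin n) ℝ) : ℝ :=
  Real.sqrt (∑ i, ∑ j, (M i j) ^ 2)

/-- Operator (spectral) norm of a square real matrix. -/
noncomputable def opNorm {n : ℕ} (M : Matrix (Fin n) (Fin n) ℝ) : ℝ :=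
  ‖Matrix.toEuclideanCLM (𝕜 := ℝ) M‖

lemma single_var {Ω : Type*} [MeasurableSpace Ω] (μ : Measure Ω) [IsProbabilityMeasure μ]
    (ξ : Ω → ℝ) (σ2 K w : ℝ) (hK : 0 < K) (hm : Measurable ξ)
    (hσ2 : 0 ≤ σ2) (hvar : σ2 = ∫ ω, (ξ ω) ^ 2 ∂μ)
    (hbern : BernsteinCond μ ξ σ2 K) (hw : 0 ≤ w) (hcond : 2 * K ^ 2 * w ≤ 1) :
    ∫ ω, Real.exp (w * (ξ ω) ^ 2) ∂μ ≤ Real.exp ((3 / 2) * (w * σ2)) := by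
  by_cases hint : Integrable (fun ω => Real.exp (w * (ξ ω) ^ 2)) μ
  · rcases eq_or_lt_of_le hw with hw0 | hw0
    · simp [← hw0]
    -- w > 0 case
    -- each power is integrable
    have hpowle : ∀ (p : ℕ) (ω : Ω), (w * (ξ ω) ^ 2) ^ p / p.factorial
        ≤ Real.exp (w * (ξ ω) ^ 2) := by
      intro p ω
      have hx : (0:ℝ) ≤ w * (ξ ω) ^ 2 := by positivity
      calc (w * (ξ ω) ^ 2) ^ p / p.factorial
          ≤ ∑ i ∈ Finset.range (p+1), (w * (ξ ω) ^ 2) ^ i / i.factorial :=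
            Finset.single_le_sum (f := fun i => (w * (ξ ω) ^ 2) ^ i / i.factorial)
              (fun i _ => by positivity) (Finset.self_mem_range_succ p)
        _ ≤ Real.exp (w * (ξ ω) ^ 2) := Real.sum_le_exp_of_nonneg hx _
    have hintpow : ∀ p : ℕ, Integrable (fun ω => (ξ ω) ^ (2 * p)) μ := by
      intro p
      have : Integrable (fun ω => (p.factorial / w ^ p) * Real.exp (w * (ξ ω) ^ 2)) μ :=
        hint.const_mul _
      refine this.mono' ?_ ?_
      · exact ((hm.pow_const _)).aestronglyMeasurable
      · filter_upwards with ω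
        have h1 := hpowle p ω
        have hxp : (0:ℝ) ≤ (ξ ω) ^ (2 * p) := (even_two_mul p).pow_nonneg _
        rw [Real.norm_eq_abs, abs_of_nonneg hxp]
        have hfac : (0:ℝ) < p.factorial := by positivity
        have hwp : (0:ℝ) < w ^ p := by positivity
        rw [div_le_iff₀ hfac] at h1
        have : (w * (ξ ω)^2) ^ p = w ^ p * (ξ ω) ^ (2*p) := by
          rw [mul_pow, ← pow_mul]
        rw [this] at h1
        rw [div_mul_eq_mul_div, le_div_iff₀ hwp]
        calc (ξ ω) ^ (2*p) * w ^ p = w ^ p * (ξ ω) ^ (2*p) := by ring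
          _ ≤ Real.exp (w * (ξ ω)^2) * p.factorial := h1
          _ = p.factorial * Real.exp (w * (ξ ω)^2) := by ring
    -- partial sums converge
    set f : ℕ → Ω → ℝ := fun N ω => ∑ p ∈ Finset.range N, (w * (ξ ω) ^ 2) ^ p / p.factorial
    have htend : Filter.Tendsto (fun N => ∫ ω, f N ω ∂μ) Filter.atTop
        (nhds (∫ ω, Real.exp (w * (ξ ω) ^ 2) ∂μ)) := by
      refine tendsto_integral_of_dominated_convergence
        (fun ω => Real.exp (w * (ξ ω) ^ 2)) ?_ hint ?_ ?_
      · intro N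
        exact (Finset.aestronglyMeasurable_fun_sum _ (fun p _ =>
          (((hm.pow_const 2).const_mul w).pow_const p |>.div_const _).aestronglyMeasurable))
      · intro N
        filter_upwards with ω
        have hx : (0:ℝ) ≤ w * (ξ ω) ^ 2 := by positivity
        rw [Real.norm_eq_abs, abs_of_nonneg (by positivity)]
        exact Real.sum_le_exp_of_nonneg hx N
      · filter_upwards with ω
        have := NormedSpace.expSeries_div_hasSum_exp (𝔸 := ℝ) (w * (ξ ω) ^ 2)
        have h2 := this.tendsto_sum_nat
        rw [← Real.exp_eq_exp_ℝ] at h2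
        exact h2
    refine le_trans (le_of_tendsto (b := 1 + (3/2) * (w * σ2)) htend ?_) ?_
    · filter_upwards with N
      -- ∫ f N ≤ 1 + (3/2) * (w * σ2)
      have hfi : ∀ p : ℕ, Integrable (fun ω => (w * (ξ ω) ^ 2) ^ p / p.factorial) μ := by
        intro p
        have : (fun ω => (w * (ξ ω) ^ 2) ^ p / p.factorial)
            = fun ω => (w ^ p / p.factorial) * (ξ ω) ^ (2 * p) := by
          funext ω; rw [mul_pow, ← pow_mul]; ring
        rw [this]; exact (hintpow p).const_mul _
      have : ∫ ω, f N ω ∂μ = ∑ p ∈ Finset.range N,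
          (w ^ p / p.factorial) * ∫ ω, (ξ ω) ^ (2 * p) ∂μ := by
        rw [integral_finset_sum _ (fun p _ => hfi p)]
        refine Finset.sum_congr rfl fun p _ => ?_
        rw [← integral_const_mul]
        congr 1; funext ω; rw [mul_pow, ← pow_mul]; ring
      rw [this]
      -- bound the sum
      set a : ℕ → ℝ := fun p => (w ^ p / p.factorial) * ∫ ω, (ξ ω) ^ (2 * p) ∂μ
      have ha0 : a 0 = 1 := by simp [a]
      have ha1 : a 1 = w * σ2 := by simp [a, hvar, pow_one]
      have hanneg : ∀ p, 0 ≤ a p := by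
        intro p
        have h0 : 0 ≤ ∫ ω, (ξ ω) ^ (2 * p) ∂μ :=
          integral_nonneg fun ω => (even_two_mul p).pow_nonneg _
        exact mul_nonneg (by positivity) h0
      have hap : ∀ p, 2 ≤ p → a p ≤ (1/2) * (w * σ2) * (1/2) ^ (p - 1) := by
        intro p hp
        obtain ⟨q, rfl⟩ : ∃ q, p = q + 2 := ⟨p - 2, by omega⟩
        have hb := hbern (q + 2) hp
        have habs : (∫ ω, |ξ ω| ^ (2 * (q+2)) ∂μ) = ∫ ω, (ξ ω) ^ (2 * (q+2)) ∂μ := by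
          congr 1; funext ω; exact (even_two_mul (q+2)).pow_abs _
        rw [habs] at hb
        have hfac : (0:ℝ) < (q+2).factorial := by positivity
        calc a (q+2) ≤ (w ^ (q+2) / (q+2).factorial) * ((1/2) * (q+2).factorial * σ2 * K ^ (2*(q+2-1))) := by
              refine mul_le_mul_of_nonneg_left hb (by positivity)
          _ = (1/2) * (w * σ2) * (w * K ^ 2) ^ (q + 2 - 1) := by
              simp only [Nat.add_sub_cancel, show q + 2 - 1 = q + 1 from rfl]
              rw [mul_pow, ← pow_mul]
              field_simp
              ring
          _ ≤ (1/2) * (w * σ2) * (1/2) ^ (q + 2 - 1) := by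
              refine mul_le_mul_of_nonneg_left ?_ (by positivity)
              refine pow_le_pow_left₀ (by positivity) ?_ _
              nlinarith
      -- sum bound
      have key : ∀ N, ∑ p ∈ Finset.range N, a p ≤ 1 + (3/2) * (w * σ2) := by
        intro N
        have hmono : ∑ p ∈ Finset.range N, a p ≤ ∑ p ∈ Finset.range (N + 2), a p :=
          Finset.sum_le_sum_of_subset_of_nonneg
            (Finset.range_subset_range.2 (by omega)) (fun p _ _ => hanneg p)
        refine hmono.trans ?_
        rw [Finset.range_eq_Ico, Finset.sum_eq_sum_Ico_succ_bot (by omega),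
          Finset.sum_eq_sum_Ico_succ_bot (by omega), ha0, ha1]
        have hgeo : ∑ p ∈ Finset.Ico 2 (N + 2), ((1:ℝ)/2) ^ (p - 1) ≤ 1 := by
          rw [Finset.sum_Ico_eq_sum_range]
          simp only [Nat.add_sub_cancel]
          have heq : ∀ k ∈ Finset.range N, ((1:ℝ)/2) ^ (2 + k - 1) = (1/2) * (1/2)^k := by
            intro k _
            have hk : 2 + k - 1 = k + 1 := by omega
            rw [hk, pow_succ]; ring
          rw [Finset.sum_congr rfl heq, ← Finset.mul_sum]
          have hg : ∑ k ∈ Finset.range N, ((1:ℝ)/2)^k = (((1:ℝ)/2)^N - 1)/((1/2:ℝ)-1) :=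
            geom_sum_eq (by norm_num) N
          have h0 : (0:ℝ) ≤ ((1:ℝ)/2)^N := by positivity
          have hdiv : (((1:ℝ)/2)^N - 1)/((1/2:ℝ)-1) = 2*(1-((1:ℝ)/2)^N) := by ring
          rw [hg, hdiv]
          linarith
        have hsum2 : ∑ p ∈ Finset.Ico 2 (N + 2), a p ≤ (1/2) * (w * σ2) := by
          calc ∑ p ∈ Finset.Ico 2 (N + 2), a p
              ≤ ∑ p ∈ Finset.Ico 2 (N + 2), (1/2) * (w * σ2) * (1/2) ^ (p-1) := by
                refine Finset.sum_le_sum fun p hp => hap p ?_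
                exact (Finset.mem_Ico.1 hp).1
            _ = (1/2) * (w * σ2) * ∑ p ∈ Finset.Ico 2 (N + 2), ((1:ℝ)/2) ^ (p-1) := by
                rw [Finset.mul_sum]
            _ ≤ (1/2) * (w * σ2) * 1 := by
                refine mul_le_mul_of_nonneg_left hgeo (by positivity)
            _ = (1/2) * (w * σ2) := by ring
        linarith
      exact key N
    · have := Real.add_one_le_exp ((3/2) * (w * σ2))
      linarith
  · rw [integral_undef hint]
    positivity

theorem mgf_weighted_sum_squares_bernstein
    {Ω : Type*} [MeasurableSpace Ω] (μ : Measure Ω) [IsProbabilityMeasure μ]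
    {n : ℕ} (ξ : Fin n → Ω → ℝ) (σ : Fin n → ℝ) (K : ℝ) (hK : 0 < K)
    (hmeas : ∀ i, Measurable (ξ i))
    (hindep : iIndepFun ξ μ)
    (hmean : ∀ i, ∫ ω, ξ i ω ∂μ = 0)
    (hσ : ∀ i, 0 ≤ σ i)
    (hvar : ∀ i, (σ i) ^ 2 = ∫ ω, (ξ i ω) ^ 2 ∂μ)
    (hbern : ∀ i, BernsteinCond μ (ξ i) ((σ i) ^ 2) K)
    (w : Fin n → ℝ) (hw : ∀ i, 0 ≤ w i) (hcond : ∀ i, 2 * K ^ 2 * w i ≤ 1) :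
    ∫ ω, Real.exp (∑ i, w i * (ξ i ω) ^ 2) ∂μ
      ≤ Real.exp ((3 / 2) * ∑ i, w i * (σ i) ^ 2) := by
  set Y : Fin n → Ω → ℝ := fun i ω => w i * (ξ i ω) ^ 2 with hY
  have hYmeas : ∀ i, Measurable (Y i) := fun i => ((hmeas i).pow_const 2).const_mul (w i)
  have hYindep : iIndepFun Y μ :=
    hindep.comp (fun i (x : ℝ) => w i * x ^ 2)
      (fun i => (measurable_id.pow_const 2).const_mul _)
  have hLHS : ∫ ω, Real.exp (∑ i, w i * (ξ i ω) ^ 2) ∂μ = mgf (∑ i, Y i) μ 1 := by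
    simp [mgf, Finset.sum_apply, Y]
  rw [hLHS, iIndepFun.mgf_sum hYindep hYmeas Finset.univ]
  calc ∏ i, mgf (Y i) μ 1
      ≤ ∏ i, Real.exp ((3 / 2) * (w i * (σ i) ^ 2)) := by
        refine Finset.prod_le_prod (fun i _ => mgf_nonneg) (fun i _ => ?_)
        have : mgf (Y i) μ 1 = ∫ ω, Real.exp (w i * (ξ i ω) ^ 2) ∂μ := by
          simp [mgf, Y]
        rw [this]
        exact single_var μ (ξ i) ((σ i) ^ 2) K (w i) hK (hmeas i)
          (by positivity) (hvar i) (hbern i) (hw i) (hcond i)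
    _ = Real.exp ((3 / 2) * ∑ i, w i * (σ i) ^ 2) := by
        rw [← Real.exp_sum, Finset.mul_sum]
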